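/- Let G be a (d,k;+1)-digraph with outlier automorphism o, and let u_0, u_1, ..., u_r be a directed path in G with r ≤ k. If t = lcm(ω(u_0), ω(u_r)), where ω(v) denotes the order of v under o (the least positive integer m with o^m(v) = v), then ω(u_i) divides t for all 0 ≤ i ≤ r. -/

import Mathlib

/-- `IsWalk A w` means the nonempty list `w` of vertices is a directed walk
in the digraph with adjacency relation `A`. -/
def IsWalk {V : Type*} (A : V → V → Prop) : List V → Prop
  | [] => False
  | [_] => True
  | a :: b :: l => A a b ∧ IsWalk A (b :: l)

/-- `WalkFrom A u v w` means `w` is a directed walk from `u` to `v`.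
A walk represented by a list of length `n+1` has length `n` as a walk. -/
def WalkFrom {V : Type*} (A : V → V → Prop) (u v : V) (w : List V) : Prop :=
  IsWalk A w ∧ w.head? = some u ∧ w.getLast? = some v

/-- A digraph is `k`-geodetic if for any (not necessarily distinct) vertices
`u, v` there is at most one directed walk from `u` to `v` of length `≤ k`. -/
def KGeodetic {V : Type*} (A : V → V → Prop) (k : ℕ) : Prop :=
  ∀ u v : V, ∀ w₁ w₂ : List V, WalkFrom A u v w₁ → WalkFrom A u v w₂ →
    w₁.length ≤ k + 1 → w₂.length ≤ k + 1 → w₁ = w₂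

/-- `ReachIn A k u v` means there is a directed walk from `u` to `v` of
length at most `k`. -/
def ReachIn {V : Type*} (A : V → V → Prop) (k : ℕ) (u v : V) : Prop :=
  ∃ w : List V, WalkFrom A u v w ∧ w.length ≤ k + 1

/-- The directed Moore bound `M(d,k) = 1 + d + d^2 + ... + d^k`. -/
def mooreBound (d k : ℕ) : ℕ := ∑ i ∈ Finset.range (k + 1), d ^ i

/-- `o` is the outlier function of a `k`-geodetic digraph with excess one:
for each vertex `u`, `o u` is the unique vertex not reachable from `u` by a
walk of length at most `k`. -/
def IsOutlierFn {V : Type*} (A : V → V → Prop) (k : ℕ) (o : V → V) : Prop :=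
  ∀ u v : V, ¬ ReachIn A k u v ↔ v = o u

/-- A homomorphism maps walks to walks. -/
lemma isWalk_map {V : Type*} {A : V → V → Prop} {g : V → V}
    (hg : ∀ a b : V, A a b → A (g a) (g b)) :
    ∀ w : List V, IsWalk A w → IsWalk A (w.map g)
  | [], h => h
  | [_], _ => trivial
  | a :: b :: l, h => ⟨hg a b h.1, isWalk_map hg (b :: l) h.2⟩

/-- Periodicity: if `f^[p] x = x` then `f^[p*q] x = x`. -/
lemma iterate_mul_fixed {V : Type*} {f : V → V} {x : V} {p : ℕ}
    (h : f^[p] x = x) (q : ℕ) : f^[p * q] x = x := by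
  induction q with
  | zero => simp
  | succ n ih =>
      rw [Nat.mul_succ, Function.iterate_add_apply, h, ih]

/-- From `f^[p] x = x` and `p ∣ t` deduce `f^[t] x = x`. -/
lemma iterate_dvd_fixed {V : Type*} {f : V → V} {x : V} {p t : ℕ}
    (h : f^[p] x = x) (hd : p ∣ t) : f^[t] x = x := by
  obtain ⟨q, rfl⟩ := hd
  exact iterate_mul_fixed h q

/-- Minimal period divides any period. -/
lemma minperiod_dvd {V : Type*} {f : V → V} {x : V} {p t : ℕ}
    (hp : 0 < p) (hfix : f^[p] x = x)
    (hmin : ∀ m : ℕ, 0 < m → f^[m] x = x → p ≤ m)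
    (ht : f^[t] x = x) : p ∣ t := by
  have hmod : f^[t % p] x = x := by
    have h1 : f^[t % p + p * (t / p)] x = x := by
      rw [Nat.mod_add_div]; exact ht
    rwa [Function.iterate_add_apply, iterate_mul_fixed hfix] at h1
  rcases Nat.eq_zero_or_pos (t % p) with h0 | h0
  · exact Nat.dvd_of_mod_eq_zero h0
  · exact absurd (hmin _ h0 hmod) (Nat.not_le.mpr (Nat.mod_lt _ hp))

/-- Let `G` be a `(d,k;+1)`-digraph with outlier automorphism `o`, let `ω v`
denote the order of `v` under `o`, and let `u₀, u₁, …, u_r` be a directed path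
with `r ≤ k`. Then `ω(u_i)` divides `lcm(ω(u₀), ω(u_r))` for every vertex of
the path. -/
theorem stmt_14 {V : Type*} [Fintype V] (A : V → V → Prop) (d k : ℕ)
    (hd : 2 ≤ d) (hk : 2 ≤ k)
    (hgeo : KGeodetic A k)
    (hdeg : ∀ u : V, d ≤ Set.ncard {w : V | A u w})
    (hcard : Fintype.card V = mooreBound d k + 1)
    (o : V → V) (ho : IsOutlierFn A k o)
    (hbij : Function.Bijective o)
    (hhom : ∀ a b : V, A a b ↔ A (o a) (o b))
    (ω : V → ℕ)
    (hω : ∀ v : V, 0 < ω v ∧ o^[ω v] v = v ∧ ∀ m : ℕ, 0 < m → o^[m] v = v → ω v ≤ m)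
    (r : ℕ) (hr : r ≤ k) (u₀ uᵣ : V) (w : List V)
    (hw : WalkFrom A u₀ uᵣ w) (hlen : w.length = r + 1) :
    ∀ x ∈ w, ω x ∣ Nat.lcm (ω u₀) (ω uᵣ) := by
  set t := Nat.lcm (ω u₀) (ω uᵣ) with ht
  -- g := o^[t] is a homomorphism
  have hgiter : ∀ n : ℕ, ∀ a b : V, A a b → A (o^[n] a) (o^[n] b) := by
    intro n
    induction n with
    | zero => intro a b h; exact h
    | succ m ih =>
        intro a b h
        rw [Function.iterate_succ_apply', Function.iterate_succ_apply']
        exact (hhom _ _).mp (ih a b h)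
  -- mapped walk
  have hmapwalk : WalkFrom A u₀ uᵣ (w.map o^[t]) := by
    obtain ⟨hwalk, hhead, hlast⟩ := hw
    refine ⟨isWalk_map (hgiter t) w hwalk, ?_, ?_⟩
    · rw [List.head?_map, hhead]
      have : o^[t] u₀ = u₀ :=
        iterate_dvd_fixed (hω u₀).2.1 (Nat.dvd_lcm_left _ _)
      simp [this]
    · rw [List.getLast?_map, hlast]
      have : o^[t] uᵣ = uᵣ :=
        iterate_dvd_fixed (hω uᵣ).2.1 (Nat.dvd_lcm_right _ _)
      simp [this]
  have hlen' : (w.map o^[t]).length = r + 1 := by simpa using hlen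
  have heq : w.map o^[t] = w :=
    hgeo u₀ uᵣ _ w hmapwalk hw (by omega) (by omega)
  -- pointwise fixed
  have hfix : ∀ x ∈ w, o^[t] x = x := by
    clear hmapwalk hlen' hw hlen
    induction w with
    | nil => intro x hx; cases hx
    | cons a l ih =>
        simp only [List.map_cons, List.cons.injEq] at heq
        intro x hx
        rcases List.mem_cons.mp hx with rfl | hx
        · exact heq.1
        · exact ih heq.2 x hx
  intro x hx
  obtain ⟨hpos, hfixp, hmin⟩ := hω x
  exact minperiod_dvd hpos hfixp hmin (hfix x hx)
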